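/- Let Ψ_j(a) denote the sum of absolute values of the roots of the Dickson polynomial E_j(x,a) for a > 0. Then for every j ≥ 1, Ψ_{j+1}(a) - Ψ_j(a) = f_j·√a, where f_j = 2·csc(π/(2j+4)) - 2·cot(π/(2j+2)) if j is odd and f_j = 2·cot(π/(2j+4)) - 2·csc(π/(2j+2)) if j is even. -/

import Mathlib

open Real Finset

lemma tele (t : ℝ) (m : ℕ) :
    (∑ h ∈ Finset.Icc 1 m, Real.cos (2 * h * t)) * (2 * Real.sin t) =
      Real.sin ((2 * m + 1) * t) - Real.sin t := by
  induction m with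
  | zero => simp
  | succ m ih =>
    rw [Finset.sum_Icc_succ_top (by omega), add_mul, ih]
    have h := Real.sin_sub_sin ((2 * (m + 1 : ℕ) + 1) * t) ((2 * m + 1) * t)
    have e1 : (((2 * (m + 1 : ℕ) + 1) : ℝ) * t - (2 * m + 1) * t) / 2 = t := by push_cast; ring
    have e2 : (((2 * (m + 1 : ℕ) + 1) : ℝ) * t + (2 * m + 1) * t) / 2 = 2 * (m + 1 : ℕ) * t := by
      push_cast; ring
    rw [e1, e2] at h
    push_cast at h ⊢
    linarith

lemma absSum (n : ℕ) (hn : 2 ≤ n) :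
    ∑ h ∈ Finset.Ioc 0 (n - 1), |Real.cos (h * π / n)| =
      (if Even n then Real.cos (π / (2 * n)) else 1) / Real.sin (π / (2 * n)) - 1 := by
  have hn0 : (n : ℝ) ≠ 0 := Nat.cast_ne_zero.mpr (by omega)
  have hn2 : (2 : ℝ) ≤ n := by exact_mod_cast hn
  have hsin : 0 < Real.sin (π / (2 * n)) := by
    apply Real.sin_pos_of_pos_of_lt_pi
    · positivity
    · rw [div_lt_iff₀ (by positivity)]
      nlinarith [Real.pi_pos]
  set f : ℕ → ℝ := fun h => |Real.cos (h * π / n)| with hf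
  have hsymm : ∀ h ≤ n, f (n - h) = f h := by
    intro h hh
    simp only [hf]
    have e1 : ((n - h : ℕ) : ℝ) = (n : ℝ) - h := by push_cast [hh]; ring
    have e2 : ((n : ℝ) - h) * π / n = π - h * π / n := by field_simp
    rw [e1, e2, Real.cos_pi_sub, abs_neg]
  have hrefl : ∀ m ≤ n - 1, ∑ h ∈ Finset.Ioc m (n - 1), f h = ∑ h ∈ Finset.Ioc 0 (n - 1 - m), f h := by
    intro m hm
    refine Finset.sum_nbij' (fun h => n - h) (fun h => n - h) ?_ ?_ ?_ ?_ ?_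
    · intro a ha; simp only [Finset.mem_Ioc] at *; omega
    · intro a ha; simp only [Finset.mem_Ioc] at *; omega
    · intro a ha; simp only [Finset.mem_Ioc] at ha; omega
    · intro a ha; simp only [Finset.mem_Ioc] at ha; omega
    · intro a ha; simp only [Finset.mem_Ioc] at ha
      exact (hsymm a (by omega)).symm
  have habs : ∀ h : ℕ, 2 * h ≤ n → f h = Real.cos (2 * h * (π / (2 * n))) := by
    intro h hh
    have hh2 : (2 : ℝ) * h ≤ n := by exact_mod_cast hh
    have e : (2 : ℝ) * h * (π / (2 * n)) = h * π / n := by field_simp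
    simp only [hf]
    rw [← e]
    apply abs_of_nonneg
    apply Real.cos_nonneg_of_mem_Icc
    constructor
    · have h0 : (0:ℝ) ≤ 2 * h * (π / (2 * n)) := by positivity
      have := Real.pi_pos
      linarith
    · rw [e, div_le_iff₀ (by positivity)]
      nlinarith [Real.pi_pos]
  rcases Nat.even_or_odd n with he | ho
  · obtain ⟨k, hk⟩ := he
    have hk1 : 1 ≤ k := by omega
    have hkr : ((k - 1 : ℕ) : ℝ) = (k : ℝ) - 1 := by push_cast [hk1]; ring
    have hnr : (n : ℝ) = 2 * k := by push_cast [hk]; ring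
    have hk0 : (k : ℝ) ≠ 0 := by rw [hnr] at hn0; intro h; rw [h] at hn0; simp at hn0
    have hsplit : ∑ h ∈ Finset.Ioc 0 (k - 1), f h + ∑ h ∈ Finset.Ioc (k - 1) (n - 1), f h
        = ∑ h ∈ Finset.Ioc 0 (n - 1), f h :=
      Finset.sum_Ioc_consecutive f (show 0 ≤ k - 1 by omega) (show k - 1 ≤ n - 1 by omega)
    have h2 : ∑ h ∈ Finset.Ioc (k - 1) (n - 1), f h = ∑ h ∈ Finset.Ioc 0 k, f h := by
      rw [hrefl (k - 1) (by omega), show n - 1 - (k - 1) = k from by omega]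
    have hfk : f k = 0 := by
      simp only [hf]
      have e : (k : ℝ) * π / n = π / 2 := by rw [hnr]; field_simp
      rw [e, Real.cos_pi_div_two, abs_zero]
    have h3 : ∑ h ∈ Finset.Ioc 0 ((k - 1) + 1), f h = ∑ h ∈ Finset.Ioc 0 (k - 1), f h + f ((k-1) + 1) :=
      Finset.sum_Ioc_succ_top (by omega) f
    rw [show (k - 1) + 1 = k from by omega] at h3
    have hcos : ∑ h ∈ Finset.Ioc 0 (k - 1), f h
        = ∑ h ∈ Finset.Icc 1 (k - 1), Real.cos (2 * h * (π / (2 * n))) := by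
      rw [← Finset.Icc_add_one_left_eq_Ioc]
      exact Finset.sum_congr rfl fun h hh => habs h (by simp only [Finset.mem_Icc] at hh; omega)
    have ht := tele (π / (2 * n)) (k - 1)
    have hval : Real.sin ((2 * ((k - 1 : ℕ) : ℝ) + 1) * (π / (2 * n))) = Real.cos (π / (2 * n)) := by
      rw [← Real.sin_pi_div_two_sub]
      congr 1
      rw [hkr, hnr]
      field_simp
      ring
    rw [hval] at ht
    rw [if_pos ⟨k, hk⟩]
    have hT : ∑ h ∈ Finset.Ioc 0 (n - 1), f h
        = 2 * ∑ h ∈ Finset.Icc 1 (k - 1), Real.cos (2 * h * (π / (2 * n))) := by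
      rw [← hsplit, h2, h3, hfk, hcos]; ring
    rw [hT]
    rw [show (2:ℝ) * ∑ h ∈ Finset.Icc 1 (k - 1), Real.cos (2 * h * (π / (2 * n)))
        = (Real.cos (π / (2 * n)) - Real.sin (π / (2 * n))) / Real.sin (π / (2 * n)) from by
      rw [eq_div_iff hsin.ne']; linear_combination ht]
    rw [sub_div, div_self hsin.ne']
  · obtain ⟨k, hk⟩ := ho
    have hk1 : 1 ≤ k := by omega
    have hnr : (n : ℝ) = 2 * k + 1 := by push_cast [hk]; ring
    have hsplit : ∑ h ∈ Finset.Ioc 0 k, f h + ∑ h ∈ Finset.Ioc k (n - 1), f h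
        = ∑ h ∈ Finset.Ioc 0 (n - 1), f h :=
      Finset.sum_Ioc_consecutive f (show 0 ≤ k by omega) (show k ≤ n - 1 by omega)
    have h2 : ∑ h ∈ Finset.Ioc k (n - 1), f h = ∑ h ∈ Finset.Ioc 0 k, f h := by
      rw [hrefl k (by omega), show n - 1 - k = k from by omega]
    have hcos : ∑ h ∈ Finset.Ioc 0 k, f h
        = ∑ h ∈ Finset.Icc 1 k, Real.cos (2 * h * (π / (2 * n))) := by
      rw [← Finset.Icc_add_one_left_eq_Ioc]
      exact Finset.sum_congr rfl fun h hh => habs h (by simp only [Finset.mem_Icc] at hh; omega)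
    have ht := tele (π / (2 * n)) k
    have hval : Real.sin ((2 * (k : ℝ) + 1) * (π / (2 * n))) = 1 := by
      rw [show (2 * (k : ℝ) + 1) * (π / (2 * n)) = π / 2 from by rw [hnr]; field_simp,
        Real.sin_pi_div_two]
    rw [hval] at ht
    rw [if_neg (by simp [hk, parity_simps])]
    have hT : ∑ h ∈ Finset.Ioc 0 (n - 1), f h
        = 2 * ∑ h ∈ Finset.Icc 1 k, Real.cos (2 * h * (π / (2 * n))) := by
      rw [← hsplit, h2, hcos]; ring
    rw [hT]
    rw [show (2:ℝ) * ∑ h ∈ Finset.Icc 1 k, Real.cos (2 * h * (π / (2 * n)))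
        = (1 - Real.sin (π / (2 * n))) / Real.sin (π / (2 * n)) from by
      rw [eq_div_iff hsin.ne']; linear_combination ht]
    rw [sub_div, div_self hsin.ne']

/-- `PsiE j a` : sum of absolute values of the roots of the Dickson polynomial
of the second kind `E_j(x,a)`, namely `2√a·cos(hπ/(j+1))`, `h = 1,…,j`. -/
noncomputable def PsiE (j : ℕ) (a : ℝ) : ℝ :=
  ∑ h ∈ Finset.Icc 1 j, |2 * Real.sqrt a * Real.cos (h * Real.pi / (j + 1))|

theorem stmt_15 (a : ℝ) (ha : 0 < a) (j : ℕ) (hj : 1 ≤ j) :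
    PsiE (j + 1) a - PsiE j a =
      (if Odd j then
          2 * (Real.sin (Real.pi / (2 * j + 4)))⁻¹ - 2 * Real.cot (Real.pi / (2 * j + 2))
        else
          2 * Real.cot (Real.pi / (2 * j + 4)) - 2 * (Real.sin (Real.pi / (2 * j + 2)))⁻¹)
        * Real.sqrt a := by
  have h2a : (0:ℝ) ≤ 2 * Real.sqrt a := by positivity
  have hP : ∀ m : ℕ, PsiE m a
      = 2 * Real.sqrt a * ∑ h ∈ Finset.Ioc 0 ((m + 1) - 1), |Real.cos (h * π / ((m + 1 : ℕ) : ℝ))| := by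
    intro m
    unfold PsiE
    rw [Finset.mul_sum, show (m + 1) - 1 = m from rfl, ← Finset.Icc_add_one_left_eq_Ioc]
    apply Finset.sum_congr rfl
    intro h hh
    rw [abs_mul, abs_of_nonneg h2a]
    congr 2
    push_cast; ring
  rw [hP (j + 1), hP j, show j + 1 + 1 = j + 2 from rfl,
    absSum (j + 2) (by omega), absSum (j + 1) (by omega)]
  have c2 : ((j + 2 : ℕ) : ℝ) = (j : ℝ) + 2 := by push_cast; ring
  have c1 : ((j + 1 : ℕ) : ℝ) = (j : ℝ) + 1 := by push_cast; ring
  rw [c2, c1, show (2:ℝ) * ((j:ℝ) + 2) = 2 * (j:ℝ) + 4 from by ring,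
    show (2:ℝ) * ((j:ℝ) + 1) = 2 * (j:ℝ) + 2 from by ring]
  have hEiff : Even (j + 2) ↔ Even j := by simp [Nat.even_add]
  have hE1 : Even (j + 1) ↔ ¬ Even j := Nat.even_add_one
  have hOdd : Odd j ↔ ¬ Even j := Nat.not_even_iff_odd.symm
  rcases Nat.even_or_odd j with he | ho
  · rw [if_pos (hEiff.mpr he), if_neg (fun h => (hE1.mp h) he),
      if_neg (fun h => (hOdd.mp h) he), Real.cot_eq_cos_div_sin]
    ring
  · have hne : ¬ Even j := hOdd.mp ho
    rw [if_neg (fun h => hne (hEiff.mp h)), if_pos (hE1.mpr hne), if_pos ho,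
      Real.cot_eq_cos_div_sin]
    ring
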